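/- Let a : ℝ → ℂ be a measurable function of finite 2-variation V, i.e. V = sup (Σ_{i=0}^{m−1} |a(t_{i+1}) − a(t_i)|²)^{1/2} over all finite increasing real sequences t₀ < t₁ < ⋯ < t_m. Then for every h > 0, ∫_{ℝ} |a(t + h) − a(t)|² dt ≤ h V². -/

import Mathlib

open MeasureTheory ENNReal Set

noncomputable section

/-- The 2-variation norm of a function `a : ℝ → ℂ`: the supremum over all finite
increasing real sequences `t₀ < t₁ < ⋯ < t_m` of `(Σ |a(t_{i+1}) − a(t_i)|²)^{1/2}`. -/
def V2line (a : ℝ → ℂ) : ℝ≥0∞ :=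
  ⨆ (m : ℕ) (t : Fin (m + 1) → ℝ) (_ : StrictMono t),
    ENNReal.ofReal (Real.sqrt (∑ i : Fin m, ‖a (t i.succ) - a (t i.castSucc)‖ ^ 2))

lemma v2_sum_le (a : ℝ → ℂ) (V : ℝ) (hV0 : 0 ≤ V)
    (hV : V2line a = ENNReal.ofReal V) (h : ℝ) (hh : 0 < h) (t0 : ℝ) (M : ℕ) :
    ∑ k ∈ Finset.Icc (-(M:ℤ)) M,
        ((‖a (t0 + ((k:ℝ)+1)*h) - a (t0 + (k:ℝ)*h)‖₊ : ℝ≥0∞))^2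
      ≤ ENNReal.ofReal (V^2) := by
  set m : ℕ := 2*M+1 with hm
  set T : Fin (m+1) → ℝ := fun j => t0 + (((j:ℕ):ℝ) - M) * h with hT
  have hTmono : StrictMono T := by
    intro x y hxy
    have hx : ((x:ℕ):ℝ) < ((y:ℕ):ℝ) := by exact_mod_cast hxy
    simp only [hT]
    have := mul_lt_mul_of_pos_right (sub_lt_sub_right hx (M:ℝ)) hh
    linarith
  set S : ℝ := ∑ i : Fin m, ‖a (T i.succ) - a (T i.castSucc)‖ ^ 2 with hS
  have hS0 : 0 ≤ S := Finset.sum_nonneg fun i _ => sq_nonneg _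
  have h1 : ENNReal.ofReal (Real.sqrt S) ≤ V2line a :=
    le_iSup_of_le m (le_iSup_of_le T (le_iSup_of_le hTmono le_rfl))
  rw [hV] at h1
  have h2 : Real.sqrt S ≤ V := (ENNReal.ofReal_le_ofReal_iff hV0).1 h1
  have hSV : S ≤ V^2 := by nlinarith [Real.sq_sqrt hS0, Real.sqrt_nonneg S]
  have hsum : ∑ k ∈ Finset.Icc (-(M:ℤ)) M,
      ((‖a (t0 + ((k:ℝ)+1)*h) - a (t0 + (k:ℝ)*h)‖₊ : ℝ≥0∞))^2
      = ∑ i : Fin m, ((‖a (T i.succ) - a (T i.castSucc)‖₊ : ℝ≥0∞))^2 := by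
    refine Finset.sum_nbij' (fun k => (⟨min (k + M).toNat (2*M), by omega⟩ : Fin m))
      (fun i => (i : ℤ) - M) ?_ ?_ ?_ ?_ ?_
    · intro k _; exact Finset.mem_univ _
    · intro i _
      simp only [Finset.mem_Icc]
      have := i.isLt
      omega
    · intro k hk
      simp only [Finset.mem_Icc] at hk
      simp only []
      omega
    · intro i _
      have := i.isLt
      apply Fin.ext
      simp only []
      omega
    · intro k hk
      simp only [Finset.mem_Icc] at hk
      have htoNat : ((k + M).toNat : ℤ) = k + M := Int.toNat_of_nonneg (by omega)
      have hc : (((k + M).toNat : ℕ) : ℝ) = (k:ℝ) + M := by exact_mod_cast htoNat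
      have hmin : min (k + M).toNat (2*M) = (k + M).toNat := by omega
      have e1 : T (Fin.succ ⟨min (k + (M:ℤ)).toNat (2*M), by omega⟩) = t0 + ((k:ℝ)+1)*h := by
        simp only [hT, Fin.val_succ, hmin]
        push_cast
        rw [hc]; ring
      have e2 : T (Fin.castSucc ⟨min (k + (M:ℤ)).toNat (2*M), by omega⟩) = t0 + (k:ℝ)*h := by
        simp only [hT, Fin.coe_castSucc, hmin]
        rw [hc]; ring
      rw [e1, e2]
  rw [hsum]
  have : ∑ i : Fin m, ((‖a (T i.succ) - a (T i.castSucc)‖₊ : ℝ≥0∞))^2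
      = ENNReal.ofReal S := by
    rw [hS, ENNReal.ofReal_sum_of_nonneg (fun i _ => sq_nonneg _)]
    refine Finset.sum_congr rfl fun i _ => ?_
    rw [ENNReal.ofReal_pow (norm_nonneg _), ← enorm_eq_nnnorm, ofReal_norm]
  rw [this]
  exact ENNReal.ofReal_le_ofReal hSV

lemma v2_tsum_le (a : ℝ → ℂ) (V : ℝ) (hV0 : 0 ≤ V)
    (hV : V2line a = ENNReal.ofReal V) (h : ℝ) (hh : 0 < h) (t0 : ℝ) :
    ∑' k : ℤ, ((‖a (t0 + ((k:ℝ)+1)*h) - a (t0 + (k:ℝ)*h)‖₊ : ℝ≥0∞))^2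
      ≤ ENNReal.ofReal (V^2) := by
  rw [ENNReal.tsum_eq_iSup_sum]
  refine iSup_le fun s => ?_
  set M : ℕ := s.sup fun k => k.natAbs with hM
  have hsub : s ⊆ Finset.Icc (-(M:ℤ)) M := by
    intro k hk
    have : k.natAbs ≤ M := Finset.le_sup (f := fun k : ℤ => k.natAbs) hk
    simp only [Finset.mem_Icc]
    omega
  exact le_trans (Finset.sum_le_sum_of_subset hsub) (v2_sum_le a V hV0 hV h hh t0 M)

/-- a measurable function `a : ℝ → ℂ` of finite 2-variation `V` satisfies
`∫_ℝ |a(t+h) − a(t)|² dt ≤ h V²` for every `h > 0` (the embedding `V² ⊂ Ḃ^{1/2}_{2,∞}`). -/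
theorem v2_second_difference_bound (a : ℝ → ℂ) (ha : Measurable a)
    (V : ℝ) (hV0 : 0 ≤ V) (hV : V2line a = ENNReal.ofReal V)
    (h : ℝ) (hh : 0 < h) :
    ∫⁻ t : ℝ, (‖a (t + h) - a t‖₊ : ℝ≥0∞) ^ 2 ≤ ENNReal.ofReal (h * V ^ 2) := by
  set f : ℝ → ℝ≥0∞ := fun t => (‖a (t + h) - a t‖₊ : ℝ≥0∞) ^ 2 with hfdef
  have hf : Measurable f :=
    (((ha.comp (measurable_add_const h)).sub ha).nnnorm.coe_nnreal_ennreal).pow_const 2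
  have hcover : (⋃ k : ℤ, Ico ((k:ℝ)*h) (((k:ℝ)+1)*h)) = univ := by
    ext x
    simp only [mem_iUnion, mem_Ico, mem_univ, iff_true]
    refine ⟨⌊x/h⌋, ?_, ?_⟩
    · calc ((⌊x/h⌋:ℝ))*h ≤ (x/h)*h := mul_le_mul_of_nonneg_right (Int.floor_le _) hh.le
        _ = x := div_mul_cancel₀ x hh.ne'
    · calc x = (x/h)*h := (div_mul_cancel₀ x hh.ne').symm
        _ < ((⌊x/h⌋:ℝ)+1)*h := mul_lt_mul_of_pos_right (Int.lt_floor_add_one _) hh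
  have hdisj : Pairwise (Function.onFun Disjoint fun k : ℤ => Ico ((k:ℝ)*h) (((k:ℝ)+1)*h)) := by
    intro k l hkl
    rw [Function.onFun, Set.disjoint_left]
    rintro x ⟨h1, h2⟩ ⟨h3, h4⟩
    rcases lt_or_gt_of_ne hkl with H | H
    · have : ((k:ℝ)+1) ≤ l := by exact_mod_cast H
      have := mul_le_mul_of_nonneg_right this hh.le
      linarith
    · have : ((l:ℝ)+1) ≤ k := by exact_mod_cast H
      have := mul_le_mul_of_nonneg_right this hh.le
      linarith
  have htrans : ∀ k : ℤ, ∫⁻ t in Ico ((k:ℝ)*h) (((k:ℝ)+1)*h), f t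
      = ∫⁻ y in Ico (0:ℝ) h, f (y + (k:ℝ)*h) := by
    intro k
    have hpre : (fun y : ℝ => y + (k:ℝ)*h) ⁻¹' Ico ((k:ℝ)*h) (((k:ℝ)+1)*h) = Ico 0 h := by
      ext y
      simp only [mem_preimage, mem_Ico]
      constructor <;> rintro ⟨h1, h2⟩ <;> constructor <;> nlinarith
    have hmeas : Measurable (fun y : ℝ => y + (k:ℝ)*h) := measurable_add_const _
    have : volume.restrict (Ico ((k:ℝ)*h) (((k:ℝ)+1)*h))
        = Measure.map (fun y : ℝ => y + (k:ℝ)*h) (volume.restrict (Ico 0 h)) := by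
      conv_lhs => rw [← map_add_right_eq_self volume ((k:ℝ)*h)]
      rw [Measure.restrict_map hmeas measurableSet_Ico, hpre]
    rw [this, lintegral_map hf hmeas]
  calc ∫⁻ t : ℝ, f t = ∫⁻ t in ⋃ k : ℤ, Ico ((k:ℝ)*h) (((k:ℝ)+1)*h), f t := by
        rw [hcover, Measure.restrict_univ]
    _ = ∑' k : ℤ, ∫⁻ t in Ico ((k:ℝ)*h) (((k:ℝ)+1)*h), f t :=
        lintegral_iUnion (fun k => measurableSet_Ico) hdisj f
    _ = ∑' k : ℤ, ∫⁻ y in Ico (0:ℝ) h, f (y + (k:ℝ)*h) := tsum_congr htrans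
    _ = ∫⁻ y in Ico (0:ℝ) h, ∑' k : ℤ, f (y + (k:ℝ)*h) :=
        (lintegral_tsum fun k => (hf.comp (measurable_add_const _)).aemeasurable).symm
    _ ≤ ∫⁻ _ in Ico (0:ℝ) h, ENNReal.ofReal (V^2) := by
        refine lintegral_mono fun y => ?_
        have : ∀ k : ℤ, f (y + (k:ℝ)*h)
            = ((‖a (y + ((k:ℝ)+1)*h) - a (y + (k:ℝ)*h)‖₊ : ℝ≥0∞))^2 := by
          intro k
          have e : y + (k:ℝ)*h + h = y + ((k:ℝ)+1)*h := by ring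
          simp only [hfdef, e]
        rw [tsum_congr this]
        exact v2_tsum_le a V hV0 hV h hh y
    _ = ENNReal.ofReal (V^2) * volume (Ico (0:ℝ) h) := setLIntegral_const _ _
    _ = ENNReal.ofReal (h * V ^ 2) := by
        rw [Real.volume_Ico, sub_zero, ← ENNReal.ofReal_mul (by positivity)]
        ring_nf

end
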